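/- Let ε' > 0, ε* > 0, and α, β ∈ (0, 1), and let T = ⌈(1/α)·(2/β)^{ε*/ε'}·ln(2/β)⌉. Then ∑_{k=0}^∞ (1 − e^{−ε'})·e^{−ε' k} · (1 − α·e^{−ε* k})^{T} ≤ β. (This is the key estimate showing that if some mechanism M_{i*} with privacy parameter ε* outputs a value ≥ o* with probability at least α, and it is repeated T times in the hyperparameter tuning mechanism with random dropping using threshold noise k ~ Geo(e^{−ε'}), then the probability that every copy is either dropped (each copy survives with probability e^{−ε* k}) or outputs below o* is at most β; hence the mechanism outputs an element larger than (o*, 0) with probability at least 1 − β.) -/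

import Mathlib

open Real

/-- Key estimate in the utility guarantee (Theorem `goodness-guarantee`) of the
hyperparameter tuning mechanism with random dropping: with threshold noise
`k ~ Geo(e^(-ε'))`, if a mechanism with parameter `ε*` outputs a good value with
probability at least `α` and is repeated `T = ⌈(1/α)·(2/β)^(ε*/ε')·ln(2/β)⌉` times,
then the probability that every copy is dropped or bad is at most `β`. -/
theorem goodness_guarantee_estimate
    (ε' εs α β : ℝ) (hε' : 0 < ε') (hεs : 0 < εs)
    (hα : α ∈ Set.Ioo (0:ℝ) 1) (hβ : β ∈ Set.Ioo (0:ℝ) 1) :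
    (∑' k : ℕ, (1 - Real.exp (-ε')) * Real.exp (-ε' * k) *
        (1 - α * Real.exp (-εs * k)) ^
          ⌈(1 / α) * (2 / β) ^ (εs / ε') * Real.log (2 / β)⌉₊)
      ≤ β := by
  obtain ⟨hα0, hα1⟩ := hα
  obtain ⟨hβ0, hβ1⟩ := hβ
  set T := ⌈(1 / α) * (2 / β) ^ (εs / ε') * Real.log (2 / β)⌉₊ with hT
  set p := Real.exp (-ε') with hpdef
  have hp0 : (0:ℝ) < p := Real.exp_pos _
  have hp1 : p < 1 := by
    rw [hpdef, Real.exp_lt_one_iff]; linarith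
  have h2β : 1 < 2 / β := by rw [lt_div_iff₀ hβ0]; linarith
  have hlog : 0 < Real.log (2 / β) := Real.log_pos h2β
  set L := Real.log (2 / β) / ε' with hLdef
  have hL0 : 0 < L := div_pos hlog hε'
  set N := ⌊L⌋₊ + 1 with hNdef
  have hLN : L ≤ (N : ℝ) := by
    push_cast
    simpa [hNdef] using (Nat.lt_floor_add_one L).le
  -- pointwise facts about the base
  have hbase0 : ∀ k : ℕ, 0 ≤ 1 - α * Real.exp (-εs * k) := by
    intro k
    have h1 : Real.exp (-εs * k) ≤ 1 := by
      rw [Real.exp_le_one_iff]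
      have : (0:ℝ) ≤ (k:ℝ) := Nat.cast_nonneg k
      nlinarith
    nlinarith [Real.exp_pos (-εs * (k:ℝ))]
  have hbase1 : ∀ k : ℕ, 1 - α * Real.exp (-εs * k) ≤ 1 := by
    intro k
    nlinarith [Real.exp_pos (-εs * (k:ℝ))]
  -- rewrite geometric weight as a power
  have hgeom : ∀ k : ℕ, Real.exp (-ε' * k) = p ^ k := by
    intro k
    rw [hpdef, ← Real.exp_nat_mul]
    ring_nf
  -- the summand
  set f : ℕ → ℝ := fun k => (1 - p) * Real.exp (-ε' * k) * (1 - α * Real.exp (-εs * k)) ^ T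
    with hfdef
  have hf_nonneg : ∀ k, 0 ≤ f k := by
    intro k
    apply mul_nonneg (mul_nonneg (by linarith) (Real.exp_nonneg _))
    exact pow_nonneg (hbase0 k) T
  have hf_le : ∀ k, f k ≤ (1 - p) * p ^ k := by
    intro k
    rw [hfdef]
    simp only
    rw [hgeom k]
    have h1 : (1 - α * Real.exp (-εs * k)) ^ T ≤ 1 :=
      pow_le_one₀ (hbase0 k) (hbase1 k)
    exact mul_le_of_le_one_right (mul_nonneg (by linarith) (pow_nonneg hp0.le k)) h1
  have hg_summ : Summable (fun k : ℕ => (1 - p) * p ^ k) :=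
    (summable_geometric_of_lt_one hp0.le hp1).mul_left _
  have hf_summ : Summable f := Summable.of_nonneg_of_le hf_nonneg hf_le hg_summ
  -- key estimate for small k
  have key : ∀ k : ℕ, (k : ℝ) ≤ L → (1 - α * Real.exp (-εs * k)) ^ T ≤ β / 2 := by
    intro k hk
    set x := α * Real.exp (-εs * (k:ℝ)) with hxdef
    have hx0 : 0 < x := by positivity
    have h1 : 1 - x ≤ Real.exp (-x) := by
      nlinarith [Real.add_one_le_exp (-x)]
    have h2 : (1 - x) ^ T ≤ Real.exp (-x) ^ T :=
      pow_le_pow_left₀ (hbase0 k) h1 T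
    have h3 : Real.exp (-x) ^ T = Real.exp ((T:ℝ) * (-x)) := by
      rw [Real.exp_nat_mul]
    have hC : (1 / α) * (2 / β) ^ (εs / ε') * Real.log (2 / β) ≤ (T:ℝ) := Nat.le_ceil _
    have hrpow : (2 / β) ^ (εs / ε') = Real.exp (Real.log (2 / β) * (εs / ε')) :=
      Real.rpow_def_of_pos (by positivity) _
    have hexpge : 1 ≤ Real.exp (Real.log (2 / β) * (εs / ε')) * Real.exp (-εs * k) := by
      rw [← Real.exp_add]
      apply Real.one_le_exp
      have h5 : εs * k ≤ εs * L := by nlinarith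
      have h6 : εs * L = Real.log (2 / β) * (εs / ε') := by
        rw [hLdef]; field_simp
      linarith
    have hTx : Real.log (2 / β) ≤ (T:ℝ) * x := by
      have hCx : Real.log (2 / β) ≤ ((1 / α) * (2 / β) ^ (εs / ε') * Real.log (2 / β)) * x := by
        have h7 : ((1 / α) * (2 / β) ^ (εs / ε') * Real.log (2 / β)) * x =
            (Real.exp (Real.log (2 / β) * (εs / ε')) * Real.exp (-εs * k)) *
              Real.log (2 / β) := by
          rw [hrpow, hxdef]; field_simp
        rw [h7]
        have := mul_le_mul_of_nonneg_right hexpge hlog.le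
        linarith
      have h8 : ((1 / α) * (2 / β) ^ (εs / ε') * Real.log (2 / β)) * x ≤ (T:ℝ) * x :=
        mul_le_mul_of_nonneg_right hC hx0.le
      linarith
    have h9 : Real.exp ((T:ℝ) * (-x)) ≤ β / 2 := by
      rw [show (β / 2 : ℝ) = Real.exp (Real.log (β / 2)) from
        (Real.exp_log (by positivity)).symm]
      apply Real.exp_le_exp.mpr
      have h10 : Real.log (β / 2) = - Real.log (2 / β) := by
        rw [← Real.log_inv, inv_div]
      rw [h10]
      nlinarith
    calc (1 - x) ^ T ≤ Real.exp (-x) ^ T := h2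
      _ = Real.exp ((T:ℝ) * (-x)) := h3
      _ ≤ β / 2 := h9
  -- split the sum
  have hsplit : (∑ k ∈ Finset.range N, f k) + ∑' k : ℕ, f (k + N) = ∑' k : ℕ, f k :=
    hf_summ.sum_add_tsum_nat_add N
  -- head bound
  have hhead : (∑ k ∈ Finset.range N, f k) ≤ β / 2 := by
    have h1 : ∀ k ∈ Finset.range N, f k ≤ (β / 2) * ((1 - p) * p ^ k) := by
      intro k hk
      rw [Finset.mem_range] at hk
      have hkL : (k : ℝ) ≤ L := by
        have : k ≤ ⌊L⌋₊ := Nat.lt_succ_iff.mp hk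
        calc (k:ℝ) ≤ (⌊L⌋₊ : ℝ) := by exact_mod_cast this
          _ ≤ L := Nat.floor_le hL0.le
      have h2 := key k hkL
      rw [hfdef]
      simp only
      rw [hgeom k]
      have h3 : 0 ≤ (1 - p) * p ^ k := mul_nonneg (by linarith) (pow_nonneg hp0.le k)
      calc (1 - p) * p ^ k * (1 - α * Real.exp (-εs * k)) ^ T
          ≤ (1 - p) * p ^ k * (β / 2) := by
            exact mul_le_mul_of_nonneg_left h2 h3
        _ = (β / 2) * ((1 - p) * p ^ k) := by ring
    calc (∑ k ∈ Finset.range N, f k) ≤ ∑ k ∈ Finset.range N, (β / 2) * ((1 - p) * p ^ k) :=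
        Finset.sum_le_sum h1
      _ = (β / 2) * ∑ k ∈ Finset.range N, (1 - p) * p ^ k := by
          rw [Finset.mul_sum]
      _ ≤ (β / 2) * ∑' k : ℕ, (1 - p) * p ^ k := by
          apply mul_le_mul_of_nonneg_left _ (by linarith)
          exact hg_summ.sum_le_tsum _ (fun k _ => mul_nonneg (by linarith) (pow_nonneg hp0.le k))
      _ = (β / 2) * ((1 - p) * (1 - p)⁻¹) := by
          rw [tsum_mul_left, tsum_geometric_of_lt_one hp0.le hp1]
      _ = β / 2 := by
          rw [mul_inv_cancel₀ (by linarith), mul_one]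
  -- tail bound
  have hpN : p ^ N ≤ β / 2 := by
    have h1 : p ^ N = Real.exp (-ε' * N) := (hgeom N).symm
    have h2 : Real.exp (-ε' * N) ≤ Real.exp (-ε' * L) := by
      apply Real.exp_le_exp.mpr
      nlinarith
    have h3 : Real.exp (-ε' * L) = β / 2 := by
      rw [hLdef]
      rw [show -ε' * (Real.log (2 / β) / ε') = - Real.log (2/β) by field_simp]
      rw [show - Real.log (2/β) = Real.log (β/2) by rw [← Real.log_inv, inv_div]]
      exact Real.exp_log (by positivity)
    rw [h1]; linarith
  have htail : (∑' k : ℕ, f (k + N)) ≤ β / 2 := by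
    have h1 : ∀ k : ℕ, f (k + N) ≤ ((1 - p) * p ^ N) * p ^ k := by
      intro k
      calc f (k + N) ≤ (1 - p) * p ^ (k + N) := hf_le (k + N)
        _ = ((1 - p) * p ^ N) * p ^ k := by rw [pow_add]; ring
    have h2 : Summable (fun k : ℕ => ((1 - p) * p ^ N) * p ^ k) :=
      (summable_geometric_of_lt_one hp0.le hp1).mul_left _
    calc (∑' k : ℕ, f (k + N)) ≤ ∑' k : ℕ, ((1 - p) * p ^ N) * p ^ k :=
        Summable.tsum_le_tsum h1 ((hf_summ.comp_injective (add_left_injective N))) h2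
      _ = ((1 - p) * p ^ N) * (1 - p)⁻¹ := by
          rw [tsum_mul_left, tsum_geometric_of_lt_one hp0.le hp1]
      _ = p ^ N := by
          rw [mul_right_comm, mul_inv_cancel₀ (by linarith : (1:ℝ) - p ≠ 0), one_mul]
      _ ≤ β / 2 := hpN
  calc (∑' k : ℕ, f k) = (∑ k ∈ Finset.range N, f k) + ∑' k : ℕ, f (k + N) := hsplit.symm
    _ ≤ β / 2 + β / 2 := add_le_add hhead htail
    _ = β := by ring
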